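/- For integers m ≥ 3 and n ≥ 7, the minimum size of a self-identifying code of K_m × P_n satisfies γ^SID(K_m × P_n) ≥ ⌈(n+1)/3⌉·(m+2) − 2. -/

import Mathlib

open SimpleGraph Set

/-- Closed neighborhood of a vertex. -/
def cNbr {V : Type*} (G : SimpleGraph V) (v : V) : Set V := insert v (G.neighborSet v)

/-- `S` is a self-identifying code of `G`. -/
def IsSID {V : Type*} (G : SimpleGraph V) (S : Set V) : Prop :=
  S.Nonempty ∧ ∀ v : V, (cNbr G v ∩ S).Nonempty ∧
    (⋂ c ∈ cNbr G v ∩ S, cNbr G c) = {v}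

/-- Minimum cardinality of a self-identifying code. -/
noncomputable def gammaSID {V : Type*} (G : SimpleGraph V) : ℕ :=
  sInf {k | ∃ S : Set V, IsSID G S ∧ S.ncard = k}

/-- Direct product of the complete graph `K_m` with the path `P_n`. -/
def KmPn (m n : ℕ) : SimpleGraph (Fin m × Fin n) where
  Adj u w := u.1 ≠ w.1 ∧ ((u.2 : ℕ) + 1 = (w.2 : ℕ) ∨ (w.2 : ℕ) + 1 = (u.2 : ℕ))
  symm := ⟨fun u w h => ⟨h.1.symm, h.2.symm⟩⟩
  loopless := ⟨fun u h => h.1 rfl⟩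

/-- Direct product of the complete graph `K_m` with the cycle `C_n`. -/
def KmCn (m n : ℕ) : SimpleGraph (Fin m × ZMod n) where
  Adj u w := u.1 ≠ w.1 ∧ (u.2 + 1 = w.2 ∨ w.2 + 1 = u.2)
  symm := ⟨fun u w h => ⟨h.1.symm, h.2.symm⟩⟩
  loopless := ⟨fun u h => h.1 rfl⟩

lemma mem_cNbr_KmPn {m n : ℕ} (v w : Fin m × Fin n) :
    w ∈ cNbr (KmPn m n) v ↔ w = v ∨ (v.1 ≠ w.1 ∧ ((v.2 : ℕ) + 1 = (w.2 : ℕ) ∨ (w.2 : ℕ) + 1 = (v.2 : ℕ))) := by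
  simp [cNbr, KmPn, SimpleGraph.mem_neighborSet]

lemma sep {V : Type*} {G : SimpleGraph V} {S : Set V} (hS : IsSID G S) (v u : V) (huv : u ≠ v) :
    ∃ c ∈ cNbr G v ∩ S, u ∉ cNbr G c := by
  by_contra h
  push_neg at h
  have hu : u ∈ ⋂ c ∈ cNbr G v ∩ S, cNbr G c := by
    rw [Set.mem_iInter₂]; exact h
  rw [(hS.2 v).2] at hu
  exact huv hu

lemma exists_third {m : ℕ} (hm : 3 ≤ m) (i i' : Fin m) : ∃ a : Fin m, a ≠ i ∧ a ≠ i' := by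
  by_contra h
  push_neg at h
  have hsub : (Finset.univ : Finset (Fin m)) ⊆ {i, i'} := by
    intro a _
    by_cases h1 : a = i
    · simp [h1]
    · simp [h a h1]
  have h2 := Finset.card_le_card hsub
  have h3 : ({i, i'} : Finset (Fin m)).card ≤ 2 := by
    apply le_trans (Finset.card_insert_le i {i'})
    simp
  simp [Finset.card_univ] at h2
  omega

section Conditions
variable {m n : ℕ} {S : Set (Fin m × Fin n)}

/-- C2: left-support: from separating (i,j) and (i,j+2). -/
lemma lemC2 (hS : IsSID (KmPn m n) S) (k j : ℕ) (hk : k < n) (hj : j < n)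
    (hrel : k + 1 = j) (hup : j + 2 < n) (i : Fin m) :
    (i, (⟨j, hj⟩ : Fin n)) ∈ S ∨ ∃ a, a ≠ i ∧ (a, (⟨k, hk⟩ : Fin n)) ∈ S := by
  obtain ⟨c, ⟨hcv, hcS⟩, hcu⟩ :=
    sep hS (i, (⟨j, hj⟩ : Fin n)) (i, (⟨j+2, hup⟩ : Fin n))
      (by simp [Prod.ext_iff, Fin.ext_iff])
  obtain ⟨a, cj⟩ := c
  rw [mem_cNbr_KmPn] at hcv
  rcases hcv with heq | ⟨hrow, hcol⟩
  · left; rwa [heq] at hcS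
  · simp only at hrow hcol
    rcases hcol with h1 | h1
    · exfalso
      apply hcu
      rw [mem_cNbr_KmPn]
      right
      refine ⟨by simpa using hrow.symm, Or.inl ?_⟩
      simp only [Fin.val_mk] at h1 ⊢
      omega
    · right
      refine ⟨a, fun he => hrow (by rw [he]), ?_⟩
      have hcj : cj = (⟨k, hk⟩ : Fin n) := by
        apply Fin.ext
        simp only [Fin.val_mk] at h1 ⊢
        omega
      rwa [hcj] at hcS

/-- C3: right-support: from separating (i,j) and (i,j-2). -/
lemma lemC3 (hS : IsSID (KmPn m n) S) (j k : ℕ) (hj : j < n) (hk : k < n)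
    (hrel : j + 1 = k) (hdown : 2 ≤ j) (i : Fin m) :
    (i, (⟨j, hj⟩ : Fin n)) ∈ S ∨ ∃ a, a ≠ i ∧ (a, (⟨k, hk⟩ : Fin n)) ∈ S := by
  obtain ⟨c, ⟨hcv, hcS⟩, hcu⟩ :=
    sep hS (i, (⟨j, hj⟩ : Fin n)) (i, (⟨j-2, by omega⟩ : Fin n))
      (by simp [Prod.ext_iff, Fin.ext_iff]; omega)
  obtain ⟨a, cj⟩ := c
  rw [mem_cNbr_KmPn] at hcv
  rcases hcv with heq | ⟨hrow, hcol⟩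
  · left; rwa [heq] at hcS
  · simp only at hrow hcol
    rcases hcol with h1 | h1
    · right
      refine ⟨a, fun he => hrow (by rw [he]), ?_⟩
      have hcj : cj = (⟨k, hk⟩ : Fin n) := by
        apply Fin.ext
        simp only [Fin.val_mk] at h1 ⊢
        omega
      rwa [hcj] at hcS
    · exfalso
      apply hcu
      rw [mem_cNbr_KmPn]
      right
      refine ⟨by simpa using hrow.symm, Or.inr ?_⟩
      simp only [Fin.val_mk] at h1 ⊢
      omega

/-- C1L : column 0 is full. -/
lemma lemC1L (hS : IsSID (KmPn m n) S) (h2 : 2 < n) (i : Fin m) :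
    (i, (⟨0, by omega⟩ : Fin n)) ∈ S := by
  obtain ⟨c, ⟨hcv, hcS⟩, hcu⟩ :=
    sep hS (i, (⟨0, by omega⟩ : Fin n)) (i, (⟨2, h2⟩ : Fin n))
      (by simp [Prod.ext_iff, Fin.ext_iff])
  obtain ⟨a, cj⟩ := c
  rw [mem_cNbr_KmPn] at hcv
  rcases hcv with heq | ⟨hrow, hcol⟩
  · rwa [heq] at hcS
  · exfalso
    simp only at hrow hcol
    apply hcu
    rw [mem_cNbr_KmPn]
    right
    refine ⟨by simpa using hrow.symm, Or.inl ?_⟩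
    simp only [Fin.val_mk] at hcol ⊢
    omega

/-- C1R : column n-1 is full. -/
lemma lemC1R (hS : IsSID (KmPn m n) S) (h3 : 3 ≤ n) (i : Fin m) :
    (i, (⟨n-1, by omega⟩ : Fin n)) ∈ S := by
  obtain ⟨c, ⟨hcv, hcS⟩, hcu⟩ :=
    sep hS (i, (⟨n-1, by omega⟩ : Fin n)) (i, (⟨n-3, by omega⟩ : Fin n))
      (by simp [Prod.ext_iff, Fin.ext_iff]; omega)
  obtain ⟨a, cj⟩ := c
  rw [mem_cNbr_KmPn] at hcv
  rcases hcv with heq | ⟨hrow, hcol⟩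
  · rwa [heq] at hcS
  · exfalso
    simp only at hrow hcol
    apply hcu
    rw [mem_cNbr_KmPn]
    right
    have hlt := cj.isLt
    rcases hcol with h1 | h1
    · omega
    · refine ⟨by simpa using hrow.symm, Or.inr ?_⟩
      simp only [Fin.val_mk] at h1 ⊢
      omega

end Conditions

section Conditions2
variable {m n : ℕ} {S : Set (Fin m × Fin n)}

/-- C4: same-column pair separation (interior version). -/
lemma lemC4 (hS : IsSID (KmPn m n) S) (k j l : ℕ) (hk : k < n) (hj : j < n) (hl : l < n)
    (hrel1 : k + 1 = j) (hrel2 : j + 1 = l) (i i' : Fin m) (hne : i ≠ i') :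
    (i, (⟨j, hj⟩ : Fin n)) ∈ S ∨ (i', (⟨k, hk⟩ : Fin n)) ∈ S ∨ (i', (⟨l, hl⟩ : Fin n)) ∈ S := by
  obtain ⟨c, ⟨hcv, hcS⟩, hcu⟩ :=
    sep hS (i, (⟨j, hj⟩ : Fin n)) (i', (⟨j, hj⟩ : Fin n))
      (by simp [Prod.ext_iff]; intro h; exact absurd h.symm hne)
  obtain ⟨a, cj⟩ := c
  rw [mem_cNbr_KmPn] at hcv
  rcases hcv with heq | ⟨hrow, hcol⟩
  · left; rwa [heq] at hcS
  · simp only at hrow hcol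
    have hai : a = i' := by
      by_contra hai
      apply hcu
      rw [mem_cNbr_KmPn]
      right
      refine ⟨?_, ?_⟩
      · simpa using hai
      · simp only [Fin.val_mk] at hcol ⊢
        omega
    subst hai
    rcases hcol with h1 | h1
    · right; right
      have hcj : cj = (⟨l, hl⟩ : Fin n) := by
        apply Fin.ext; simp only [Fin.val_mk] at h1 ⊢; omega
      rwa [hcj] at hcS
    · right; left
      have hcj : cj = (⟨k, hk⟩ : Fin n) := by
        apply Fin.ext; simp only [Fin.val_mk] at h1 ⊢; omega
      rwa [hcj] at hcS

/-- C7: adjacent-pair separation (interior version): v=(i,j), u=(i',j+1). -/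
lemma lemC7 (hS : IsSID (KmPn m n) S) (k j l : ℕ) (hk : k < n) (hj : j < n) (hl : l < n)
    (hrel1 : k + 1 = j) (hrel2 : j + 1 = l) (i i' : Fin m) (hne : i ≠ i') :
    (∃ a, a ≠ i ∧ (a, (⟨k, hk⟩ : Fin n)) ∈ S) ∨
    (∃ a, a ≠ i ∧ a ≠ i' ∧ (a, (⟨l, hl⟩ : Fin n)) ∈ S) := by
  obtain ⟨c, ⟨hcv, hcS⟩, hcu⟩ :=
    sep hS (i, (⟨j, hj⟩ : Fin n)) (i', (⟨l, hl⟩ : Fin n))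
      (by simp [Prod.ext_iff, Fin.ext_iff]; omega)
  obtain ⟨a, cj⟩ := c
  rw [mem_cNbr_KmPn] at hcv
  rcases hcv with heq | ⟨hrow, hcol⟩
  · exfalso
    apply hcu
    rw [heq, mem_cNbr_KmPn]
    right
    exact ⟨by simpa using hne, Or.inl (by simp only [Fin.val_mk]; omega)⟩
  · simp only at hrow hcol
    rcases hcol with h1 | h1
    · right
      refine ⟨a, fun he => hrow (by rw [he]), ?_, ?_⟩
      · intro he
        apply hcu
        rw [mem_cNbr_KmPn]
        left
        apply Prod.ext
        · simpa using he.symm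
        · simp only
          apply Fin.ext
          simp only [Fin.val_mk] at h1 ⊢
          omega
      · have hcj : cj = (⟨l, hl⟩ : Fin n) := by
          apply Fin.ext; simp only [Fin.val_mk] at h1 ⊢; omega
        rwa [hcj] at hcS
    · left
      refine ⟨a, fun he => hrow (by rw [he]), ?_⟩
      have hcj : cj = (⟨k, hk⟩ : Fin n) := by
        apply Fin.ext; simp only [Fin.val_mk] at h1 ⊢; omega
      rwa [hcj] at hcS

/-- C7 at the left boundary: column 1 misses no pair. -/
lemma lemC7L (hS : IsSID (KmPn m n) S) (h1 : 1 < n) (i i' : Fin m) (hne : i ≠ i') :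
    ∃ a, a ≠ i ∧ a ≠ i' ∧ (a, (⟨1, h1⟩ : Fin n)) ∈ S := by
  obtain ⟨c, ⟨hcv, hcS⟩, hcu⟩ :=
    sep hS (i, (⟨0, by omega⟩ : Fin n)) (i', (⟨1, h1⟩ : Fin n))
      (by simp [Prod.ext_iff, Fin.ext_iff])
  obtain ⟨a, cj⟩ := c
  rw [mem_cNbr_KmPn] at hcv
  rcases hcv with heq | ⟨hrow, hcol⟩
  · exfalso
    apply hcu
    rw [heq, mem_cNbr_KmPn]
    right
    exact ⟨by simpa using hne, Or.inl rfl⟩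
  · simp only at hrow hcol
    rcases hcol with h1' | h1'
    · refine ⟨a, fun he => hrow (by rw [he]), ?_, ?_⟩
      · intro he
        apply hcu
        rw [mem_cNbr_KmPn]
        left
        apply Prod.ext
        · simpa using he.symm
        · simp only
          apply Fin.ext
          simp only [Fin.val_mk] at h1' ⊢
          omega
      · have hcj : cj = (⟨1, h1⟩ : Fin n) := by
          apply Fin.ext; simp only [Fin.val_mk] at h1' ⊢; omega
        rwa [hcj] at hcS
    · exfalso
      omega

/-- C7 at the right boundary: column n-2 misses no pair. -/
lemma lemC7R (hS : IsSID (KmPn m n) S) (h2 : 2 ≤ n) (i i' : Fin m) (hne : i ≠ i') :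
    ∃ a, a ≠ i ∧ a ≠ i' ∧ (a, (⟨n-2, by omega⟩ : Fin n)) ∈ S := by
  obtain ⟨c, ⟨hcv, hcS⟩, hcu⟩ :=
    sep hS (i, (⟨n-1, by omega⟩ : Fin n)) (i', (⟨n-2, by omega⟩ : Fin n))
      (by simp [Prod.ext_iff, Fin.ext_iff]; omega)
  obtain ⟨a, cj⟩ := c
  rw [mem_cNbr_KmPn] at hcv
  rcases hcv with heq | ⟨hrow, hcol⟩
  · exfalso
    apply hcu
    rw [heq, mem_cNbr_KmPn]
    right
    refine ⟨by simpa using hne, Or.inr ?_⟩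
    show (n-2) + 1 = (n-1)
    omega
  · simp only at hrow hcol
    have hlt := cj.isLt
    rcases hcol with h1' | h1'
    · exfalso
      omega
    · refine ⟨a, fun he => hrow (by rw [he]), ?_, ?_⟩
      · intro he
        apply hcu
        rw [mem_cNbr_KmPn]
        left
        apply Prod.ext
        · simpa using he.symm
        · simp only
          apply Fin.ext
          simp only [Fin.val_mk] at h1' ⊢
          omega
      · have hcj : cj = (⟨n-2, by omega⟩ : Fin n) := by
          apply Fin.ext; simp only [Fin.val_mk] at h1' ⊢; omega
        rwa [hcj] at hcS

end Conditions2

section CardHelpers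
variable {m : ℕ}

lemma card_ge3 (hm : 3 ≤ m) (T : Set (Fin m))
    (h : ∀ i i' : Fin m, i ≠ i' → ∃ a, a ≠ i ∧ a ≠ i' ∧ a ∈ T) :
    3 ≤ T.ncard := by
  have hne01 : (⟨0, by omega⟩ : Fin m) ≠ (⟨1, by omega⟩ : Fin m) := by
    simp [Fin.ext_iff]
  obtain ⟨a1, _, _, hPa1⟩ := h _ _ hne01
  obtain ⟨z, hz1, _⟩ := exists_third hm a1 a1
  obtain ⟨a2, ha21, _, hPa2⟩ := h a1 z (Ne.symm hz1)
  obtain ⟨a3, ha31, ha32, hPa3⟩ := h a1 a2 (Ne.symm ha21)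
  exact (Set.two_lt_ncard_iff (hs := Set.toFinite _)).mpr
    ⟨a1, a2, a3, hPa1, hPa2, hPa3, Ne.symm ha21, Ne.symm ha31, Ne.symm ha32⟩

lemma card_union_ge (T U : Set (Fin m)) (h : ∀ i, i ∈ T ∨ i ∈ U) :
    m ≤ T.ncard + U.ncard := by
  have hsub : (Set.univ : Set (Fin m)) ⊆ T ∪ U := fun a _ => h a
  calc m = (Set.univ : Set (Fin m)).ncard := by rw [Set.ncard_univ]; simp
    _ ≤ (T ∪ U).ncard := Set.ncard_le_ncard hsub (Set.toFinite _)
    _ ≤ _ := Set.ncard_union_le _ _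

lemma card_union_ge1 (T U : Set (Fin m))
    (d : Fin m) (hd : d ∈ T) (hd' : d ∈ U) (h : ∀ i, i ∈ T ∨ i ∈ U) :
    m + 1 ≤ T.ncard + U.ncard := by
  have key := Set.ncard_union_add_ncard_inter T U
  have hsub : (Set.univ : Set (Fin m)) ⊆ T ∪ U := fun a _ => h a
  have h1 : m ≤ (T ∪ U).ncard := by
    calc m = (Set.univ : Set (Fin m)).ncard := by rw [Set.ncard_univ]; simp
      _ ≤ _ := Set.ncard_le_ncard hsub (Set.toFinite _)
  have h2 : 0 < (T ∩ U).ncard :=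
    (Set.ncard_pos (hs := Set.toFinite _)).mpr ⟨d, hd, hd'⟩
  omega

lemma card_full_of (T : Set (Fin m)) (h : ∀ i, i ∈ T) :
    T.ncard = m := by
  have : T = (Set.univ : Set (Fin m)) := Set.eq_univ_of_forall h
  rw [this, Set.ncard_univ]; simp

lemma card_ge_of_one_missing (T : Set (Fin m)) (i1 : Fin m)
    (h : ∀ i, i ≠ i1 → i ∈ T) :
    m - 1 ≤ T.ncard := by
  have hsub : (Set.univ : Set (Fin m)) \ {i1} ⊆ T := by
    rintro a ⟨_, ha⟩
    exact h a ha
  have h1 := Set.ncard_le_ncard hsub (Set.toFinite _)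
  have h2 : ((Set.univ : Set (Fin m)) \ {i1}).ncard = m - 1 := by
    rw [Set.ncard_diff_singleton_of_mem (Set.mem_univ i1), Set.ncard_univ]
    simp
  omega

lemma exists_two_missing (T : Set (Fin m))
    (h : T.ncard + 2 ≤ m) :
    ∃ i1 i2, i1 ≠ i2 ∧ i1 ∉ T ∧ i2 ∉ T := by
  have hc := Set.ncard_add_ncard_compl T
  rw [Nat.card_eq_fintype_card, Fintype.card_fin] at hc
  have h2 : 1 < (Tᶜ).ncard := by omega
  obtain ⟨a, b, ha, hb, hab⟩ := (Set.one_lt_ncard_iff (hs := Set.toFinite _)).mp h2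
  exact ⟨a, b, hab, ha, hb⟩

lemma card_eq_one_iff (T : Set (Fin m))
    (h : T.ncard = 1) :
    ∃ e, e ∈ T ∧ ∀ a, a ∈ T → a = e := by
  obtain ⟨e, he⟩ := Set.ncard_eq_one.mp h
  refine ⟨e, by rw [he]; rfl, fun a hPa => ?_⟩
  rw [he] at hPa
  exact hPa

lemma card_pos_of (T : Set (Fin m)) (a : Fin m) (ha : a ∈ T) :
    1 ≤ T.ncard :=
  (Set.ncard_pos (hs := Set.toFinite _)).mpr ⟨a, ha⟩

lemma card_empty_of (T : Set (Fin m))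
    (h : T.ncard = 0) : ∀ a, a ∉ T := by
  intro a hPa
  rw [(Set.ncard_eq_zero (hs := Set.toFinite _)).mp h] at hPa
  exact hPa

end CardHelpers

/-- Number of codewords in column `j`. -/
noncomputable def xcol {m n : ℕ} (S : Set (Fin m × Fin n)) (j : ℕ) : ℕ :=
  if hj : j < n then {i : Fin m | (i, (⟨j, hj⟩ : Fin n)) ∈ S}.ncard else 0

lemma xcol_eq {m n : ℕ} (S : Set (Fin m × Fin n)) {j : ℕ} (hj : j < n) :
    xcol S j = {i : Fin m | (i, (⟨j, hj⟩ : Fin n)) ∈ S}.ncard := by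
  rw [xcol, dif_pos hj]

section ColumnLemmas
variable {m n : ℕ} {S : Set (Fin m × Fin n)}

lemma col0_eq (hS : IsSID (KmPn m n) S) (hm : 3 ≤ m) (hn : 7 ≤ n) : xcol S 0 = m := by
  rw [xcol_eq S (show 0 < n by omega)]
  exact card_full_of _ (fun i => lemC1L hS (by omega) i)

lemma collast_eq (hS : IsSID (KmPn m n) S) (hm : 3 ≤ m) (hn : 7 ≤ n) : xcol S (n-1) = m := by
  rw [xcol_eq S (show n-1 < n by omega)]
  exact card_full_of _ (fun i => lemC1R hS (by omega) i)

lemma col1_ge (hS : IsSID (KmPn m n) S) (hm : 3 ≤ m) (hn : 7 ≤ n) : 3 ≤ xcol S 1 := by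
  rw [xcol_eq S (show 1 < n by omega)]
  exact card_ge3 hm _ (fun i i' hne => lemC7L hS (show 1 < n by omega) i i' hne)

lemma colpen_ge (hS : IsSID (KmPn m n) S) (hm : 3 ≤ m) (hn : 7 ≤ n) : 3 ≤ xcol S (n-2) := by
  rw [xcol_eq S (show n-2 < n by omega)]
  exact card_ge3 hm _ (fun i i' hne => lemC7R hS (by omega) i i' hne)

/-- LW : x1 + x2 + x3 ≥ m + 1. -/
lemma lemLW (hS : IsSID (KmPn m n) S) (hm : 3 ≤ m) (hn : 7 ≤ n) :
    m + 1 ≤ xcol S 1 + xcol S 2 + xcol S 3 := by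
  have h1n : (1:ℕ) < n := by omega
  have h2n : (2:ℕ) < n := by omega
  have h3n : (3:ℕ) < n := by omega
  have hx1 : 3 ≤ xcol S 1 := col1_ge hS hm hn
  rw [xcol_eq S h1n] at hx1
  rw [xcol_eq S h1n, xcol_eq S h2n, xcol_eq S h3n]
  set A := {i : Fin m | (i, (⟨1, h1n⟩ : Fin n)) ∈ S}
  set B := {i : Fin m | (i, (⟨2, h2n⟩ : Fin n)) ∈ S}
  set C := {i : Fin m | (i, (⟨3, h3n⟩ : Fin n)) ∈ S}
  by_cases hc2 : m ≤ B.ncard + 2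
  · omega
  · obtain ⟨i1, i2, hne, hm1, hm2⟩ := exists_two_missing B (by omega)
    have hunion : ∀ i', i' ∈ A ∨ i' ∈ C := by
      intro i'
      by_cases h' : i' = i1
      · subst h'
        rcases lemC4 hS 1 2 3 h1n h2n h3n rfl rfl i2 i' hne.symm with h | h | h
        · exact absurd h hm2
        · exact Or.inl h
        · exact Or.inr h
      · rcases lemC4 hS 1 2 3 h1n h2n h3n rfl rfl i1 i' (fun hh => h' hh.symm) with h | h | h
        · exact absurd h hm1
        · exact Or.inl h
        · exact Or.inr h
    have hPR := card_union_ge A C hunion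
    by_cases hq : 1 ≤ B.ncard
    · omega
    · have hempty := card_empty_of B (by omega)
      have hfull : ∀ i, i ∈ C := by
        intro i
        rcases lemC2 hS 2 3 h2n h3n rfl (by omega) i with h | ⟨a, _, hPa⟩
        · exact h
        · exact absurd hPa (hempty a)
      have := card_full_of C hfull
      omega

/-- LT : interior triple bound x_{j-1} + x_j + x_{j+1} ≥ m + 2, for 3 ≤ j ≤ n-4. -/
lemma lemLT (hS : IsSID (KmPn m n) S) (hm : 3 ≤ m) (hn : 7 ≤ n)
    (k j l : ℕ) (hrel1 : k + 1 = j) (hrel2 : j + 1 = l) (h3 : 3 ≤ j) (h4 : j + 4 ≤ n) :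
    m + 2 ≤ xcol S k + xcol S j + xcol S l := by
  have hkn : k < n := by omega
  have hjn : j < n := by omega
  have hln : l < n := by omega
  rw [xcol_eq S hkn, xcol_eq S hjn, xcol_eq S hln]
  set P := {i : Fin m | (i, (⟨k, hkn⟩ : Fin n)) ∈ S}
  set Q := {i : Fin m | (i, (⟨j, hjn⟩ : Fin n)) ∈ S}
  set R := {i : Fin m | (i, (⟨l, hln⟩ : Fin n)) ∈ S}
  have hC2j : ∀ i, i ∈ Q ∨ ∃ a, a ≠ i ∧ a ∈ P := fun i => lemC2 hS k j hkn hjn hrel1 (by omega) i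
  have hC3j : ∀ i, i ∈ Q ∨ ∃ a, a ≠ i ∧ a ∈ R := fun i => lemC3 hS j l hjn hln hrel2 (by omega) i
  have hC2l : ∀ i, i ∈ R ∨ ∃ a, a ≠ i ∧ a ∈ Q := fun i => lemC2 hS j l hjn hln hrel2 (by omega) i
  have hC3k : ∀ i, i ∈ P ∨ ∃ a, a ≠ i ∧ a ∈ Q := fun i => lemC3 hS k j hkn hjn hrel1 (by omega) i
  have hC4 : ∀ i i', i ≠ i' → i ∈ Q ∨ i' ∈ P ∨ i' ∈ R :=
    fun i i' hne => lemC4 hS k j l hkn hjn hln hrel1 hrel2 i i' hne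
  have hC7 : ∀ i i', i ≠ i' →
      (∃ a, a ≠ i ∧ a ∈ P) ∨ (∃ a, a ≠ i ∧ a ≠ i' ∧ a ∈ R) :=
    fun i i' hne => lemC7 hS k j l hkn hjn hln hrel1 hrel2 i i' hne
  by_cases hfull : ∀ i, i ∈ Q
  · have hQm : Q.ncard = m := card_full_of Q hfull
    by_cases hP2 : 2 ≤ P.ncard
    · omega
    · by_cases hP0 : P.ncard = 0
      · have hnoP := card_empty_of P hP0
        have h3R : 3 ≤ R.ncard := by
          apply card_ge3 hm
          intro i i' hne
          rcases hC7 i i' hne with ⟨a, _, hPa⟩ | h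
          · exact absurd hPa (hnoP a)
          · exact h
        omega
      · have hP1 : P.ncard = 1 := by omega
        obtain ⟨e, hPe, huniq⟩ := card_eq_one_iff P hP1
        obtain ⟨i', hie, _⟩ := exists_third hm e e
        rcases hC7 e i' (Ne.symm hie) with ⟨a, hae, hPa⟩ | ⟨a, _, _, hRa⟩
        · exact absurd (huniq a hPa) hae
        · have := card_pos_of R a hRa
          omega
  · push_neg at hfull
    obtain ⟨i1, hi1⟩ := hfull
    by_cases htwo : ∃ p q, p ≠ q ∧ p ∉ Q ∧ q ∉ Q
    · obtain ⟨p, q, hpq, hp, hq⟩ := htwo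
      have hunion : ∀ i', i' ∈ P ∨ i' ∈ R := by
        intro i'
        by_cases h' : i' = p
        · subst h'
          rcases hC4 q i' (Ne.symm hpq) with h | h | h
          · exact absurd h hq
          · exact Or.inl h
          · exact Or.inr h
        · rcases hC4 p i' (fun hh => h' hh.symm) with h | h | h
          · exact absurd h hp
          · exact Or.inl h
          · exact Or.inr h
      have hPR := card_union_ge P R hunion
      by_cases hQ2 : 2 ≤ Q.ncard
      · omega
      · by_cases hQ0 : Q.ncard = 0
        · have hnoQ := card_empty_of Q hQ0
          have hRfull : ∀ i, i ∈ R := by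
            intro i
            rcases hC2l i with h | ⟨a, _, hQa⟩
            · exact h
            · exact absurd hQa (hnoQ a)
          have hPfull : ∀ i, i ∈ P := by
            intro i
            rcases hC3k i with h | ⟨a, _, hQa⟩
            · exact h
            · exact absurd hQa (hnoQ a)
          have := card_full_of P hPfull
          have := card_full_of R hRfull
          omega
        · have hQ1 : Q.ncard = 1 := by omega
          obtain ⟨d, hQd, huniq⟩ := card_eq_one_iff Q hQ1
          have hRd : d ∈ R := by
            rcases hC2l d with h | ⟨a, had, hQa⟩
            · exact h
            · exact absurd (huniq a hQa) had
          have hPd : d ∈ P := by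
            rcases hC3k d with h | ⟨a, had, hQa⟩
            · exact h
            · exact absurd (huniq a hQa) had
          have := card_union_ge1 P R d hPd hRd hunion
          omega
    · push_neg at htwo
      have hQ' : ∀ i, i ≠ i1 → i ∈ Q := by
        intro i hne
        by_contra h
        exact hi1 (htwo i i1 hne h)
      have hQm1 : m - 1 ≤ Q.ncard := card_ge_of_one_missing Q i1 hQ'
      have hPR : ∀ i', i' ≠ i1 → i' ∈ P ∨ i' ∈ R := by
        intro i' hne
        rcases hC4 i1 i' (Ne.symm hne) with h | h | h
        · exact absurd h hi1
        · exact Or.inl h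
        · exact Or.inr h
      have hPRge : m - 1 ≤ P.ncard + R.ncard := by
        have hsub : m - 1 ≤ (P ∪ R).ncard :=
          card_ge_of_one_missing _ i1 hPR
        have := Set.ncard_union_le P R
        omega
      by_cases hm4 : 4 ≤ m
      · omega
      · have hm3 : m = 3 := by omega
        by_cases hac : 3 ≤ P.ncard + R.ncard
        · omega
        · exfalso
          have hP1 : 1 ≤ P.ncard := by
            rcases hC2j i1 with h | ⟨a, _, hPa⟩
            · exact absurd h hi1
            · exact card_pos_of P a hPa
          have hR1 : 1 ≤ R.ncard := by
            rcases hC3j i1 with h | ⟨a, _, hRa⟩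
            · exact absurd h hi1
            · exact card_pos_of R a hRa
          have hPc : P.ncard = 1 := by omega
          have hRc : R.ncard = 1 := by omega
          obtain ⟨e, hPe, hPuniq⟩ := card_eq_one_iff P hPc
          obtain ⟨f, hRf, hRuniq⟩ := card_eq_one_iff R hRc
          have hef : e ≠ f := by
            intro hef
            obtain ⟨a, ha1, _⟩ := exists_third hm i1 i1
            obtain ⟨b, hb1, hba⟩ := exists_third hm i1 a
            have hae : a = e := by
              rcases hPR a ha1 with h | h
              · exact hPuniq a h
              · rw [hef]; exact hRuniq a h
            have hbe : b = e := by
              rcases hPR b hb1 with h | h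
              · exact hPuniq b h
              · rw [hef]; exact hRuniq b h
            exact hba (hae ▸ hbe ▸ rfl)
          rcases hC7 e f hef with ⟨a, hae, hPa⟩ | ⟨a, _, haf, hRa⟩
          · exact hae (hPuniq a hPa)
          · exact haf (hRuniq a hRa)

end ColumnLemmas

section Assembly
variable {m n : ℕ} {S : Set (Fin m × Fin n)}

lemma ncard_eq_sum (S : Set (Fin m × Fin n)) :
    S.ncard = ∑ j ∈ Finset.range n, xcol S j := by
  classical
  rw [Set.ncard_eq_toFinset_card' S]
  rw [Finset.card_eq_sum_card_fiberwise
    (f := fun v : Fin m × Fin n => v.2) (t := Finset.univ) (fun x _ => Finset.mem_univ _)]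
  rw [← Fin.sum_univ_eq_sum_range (fun j => xcol S j) n]
  apply Finset.sum_congr rfl
  intro j _
  rw [xcol, dif_pos j.isLt]
  have hj : (⟨(j:ℕ), j.isLt⟩ : Fin n) = j := rfl
  rw [hj, Set.ncard_eq_toFinset_card']
  apply Finset.card_bij' (fun (v : Fin m × Fin n) _ => v.1) (fun i _ => (i, j))
  · intro v hv
    simp only [Finset.mem_filter, Set.mem_toFinset] at hv ⊢
    obtain ⟨hvS, hv2⟩ := hv
    show (v.1, j) ∈ S
    rw [← hv2]
    exact hvS
  · intro i hi
    rw [Set.mem_toFinset] at hi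
    simp only [Finset.mem_filter, Set.mem_toFinset]
    exact ⟨hi, trivial⟩
  · intro v hv
    simp only [Finset.mem_filter, Set.mem_toFinset] at hv
    obtain ⟨_, hv2⟩ := hv
    exact Prod.ext rfl hv2.symm
  · intro i _
    rfl

lemma partial_sum (hS : IsSID (KmPn m n) S) (hm : 3 ≤ m) (hn : 7 ≤ n) :
    ∀ t : ℕ, 6 + 3*t ≤ n → 2*m + 1 + t*(m+2) ≤ ∑ j ∈ Finset.range (4 + 3*t), xcol S j := by
  intro t
  induction t with
  | zero =>
    intro _
    have e : ∑ j ∈ Finset.range (4 + 3*0), xcol S j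
        = xcol S 0 + xcol S 1 + xcol S 2 + xcol S 3 := by
      show ∑ j ∈ Finset.range 4, xcol S j = _
      rw [Finset.sum_range_succ, Finset.sum_range_succ, Finset.sum_range_succ,
        Finset.sum_range_one]
    rw [e]
    have h0 := col0_eq hS hm hn
    have hLW := lemLW hS hm hn
    omega
  | succ t ih =>
    intro h
    have ih' := ih (by omega)
    have estep : 4 + 3*(t+1) = (4+3*t) + 1 + 1 + 1 := by ring
    rw [estep, Finset.sum_range_succ, Finset.sum_range_succ, Finset.sum_range_succ]
    have hLT := lemLT hS hm hn (4+3*t) (4+3*t+1) (4+3*t+2) rfl rfl (by omega) (by omega)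
    have e2 : 4+3*t+1+1 = 4+3*t+2 := rfl
    rw [e2]
    have emul : (t+1)*(m+2) = t*(m+2) + (m+2) := by ring
    omega

lemma main_bound (hm : 3 ≤ m) (hn : 7 ≤ n) (S : Set (Fin m × Fin n))
    (hS : IsSID (KmPn m n) S) :
    (n + 1 + 2)/3 * (m+2) - 2 ≤ S.ncard := by
  obtain ⟨p, hp⟩ : ∃ p, n = p + 2 := ⟨n - 2, by omega⟩
  subst hp
  have hn7 : 7 ≤ p + 2 := hn
  have hsum := ncard_eq_sum S
  rw [Finset.sum_range_succ, Finset.sum_range_succ] at hsum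
  have hpen : 3 ≤ xcol S p := by
    have := colpen_ge hS hm hn
    simpa using this
  have hlast : xcol S (p+1) = m := by
    have := collast_eq hS hm hn
    simpa using this
  set t0 := (p + 2 - 6)/3 with ht0
  have hmono : ∑ j ∈ Finset.range (4 + 3*t0), xcol S j ≤ ∑ j ∈ Finset.range p, xcol S j := by
    apply Finset.sum_le_sum_of_subset
    apply Finset.range_subset_range.mpr
    omega
  have hpart := partial_sum hS hm hn t0 (by omega)
  have hq : (p + 2 + 1 + 2)/3 = t0 + 3 := by omega
  rw [hq]
  have hmul : (t0+3)*(m+2) = t0*(m+2) + 3*(m+2) := by ring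
  rw [hmul]
  set X := t0*(m+2)
  omega

end Assembly

lemma exists_sep_univ {m n : ℕ} (hm : 3 ≤ m) (v u : Fin m × Fin n) (hne : u ≠ v) :
    ∃ c, c ∈ cNbr (KmPn m n) v ∧ u ∉ cNbr (KmPn m n) c := by
  by_cases hu : u ∈ cNbr (KmPn m n) v
  swap
  · exact ⟨v, by rw [mem_cNbr_KmPn]; left; rfl, hu⟩
  · rw [mem_cNbr_KmPn] at hu
    rcases hu with heq | ⟨hrow, hcol⟩
    · exact absurd heq hne
    · obtain ⟨i, jf⟩ := v
      obtain ⟨i', j'f⟩ := u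
      simp only at hrow hcol
      have hjn := jf.isLt
      have hj'n := j'f.isLt
      rcases hcol with h1 | h1
      · by_cases hj : 1 ≤ (jf:ℕ)
        · refine ⟨(i', ⟨(jf:ℕ)-1, by omega⟩), ?_, ?_⟩
          · rw [mem_cNbr_KmPn]
            right
            exact ⟨hrow, Or.inr (by show (jf:ℕ)-1+1 = (jf:ℕ); omega)⟩
          · rw [mem_cNbr_KmPn]
            rintro (he | ⟨_, hb⟩)
            · rw [Prod.ext_iff] at he
              have := congrArg Fin.val he.2
              simp only [Fin.val_mk] at this
              omega
            · rcases hb with hb | hb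
              all_goals (simp only [Fin.val_mk] at hb; omega)
        · obtain ⟨a, hai, hai'⟩ := exists_third hm i i'
          refine ⟨(a, ⟨1, by omega⟩), ?_, ?_⟩
          · rw [mem_cNbr_KmPn]
            right
            refine ⟨by simpa using (Ne.symm hai), Or.inl ?_⟩
            show (jf:ℕ)+1 = 1
            omega
          · rw [mem_cNbr_KmPn]
            rintro (he | ⟨_, hb⟩)
            · rw [Prod.ext_iff] at he
              exact hai' (by simpa using he.1.symm)
            · rcases hb with hb | hb
              all_goals (simp only [Fin.val_mk] at hb; omega)
      · by_cases hj : (jf:ℕ) + 1 < n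
        · refine ⟨(i', ⟨(jf:ℕ)+1, hj⟩), ?_, ?_⟩
          · rw [mem_cNbr_KmPn]
            right
            exact ⟨hrow, Or.inl (by show (jf:ℕ)+1 = (jf:ℕ)+1; rfl)⟩
          · rw [mem_cNbr_KmPn]
            rintro (he | ⟨_, hb⟩)
            · rw [Prod.ext_iff] at he
              have := congrArg Fin.val he.2
              simp only [Fin.val_mk] at this
              omega
            · rcases hb with hb | hb
              all_goals (simp only [Fin.val_mk] at hb; omega)
        · obtain ⟨a, hai, hai'⟩ := exists_third hm i i'
          refine ⟨(a, ⟨(jf:ℕ)-1, by omega⟩), ?_, ?_⟩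
          · rw [mem_cNbr_KmPn]
            right
            refine ⟨by simpa using (Ne.symm hai), Or.inr ?_⟩
            show (jf:ℕ)-1+1 = (jf:ℕ)
            omega
          · rw [mem_cNbr_KmPn]
            rintro (he | ⟨ha, hb⟩)
            · rw [Prod.ext_iff] at he
              exact hai' (by simpa using he.1.symm)
            · rcases hb with hb | hb
              all_goals (simp only [Fin.val_mk] at hb; omega)

lemma isSID_univ {m n : ℕ} (hm : 3 ≤ m) (hn : 7 ≤ n) :
    IsSID (KmPn m n) (Set.univ : Set (Fin m × Fin n)) := by
  constructor
  · exact ⟨(⟨0, by omega⟩, ⟨0, by omega⟩), Set.mem_univ _⟩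
  · intro v
    constructor
    · exact ⟨v, ⟨by rw [mem_cNbr_KmPn]; left; rfl, Set.mem_univ _⟩⟩
    · apply Set.Subset.antisymm
      · intro u hu
        rw [Set.mem_iInter₂] at hu
        rw [Set.mem_singleton_iff]
        by_contra hne
        obtain ⟨c, hcv, hcu⟩ := exists_sep_univ hm v u hne
        exact hcu (hu c ⟨hcv, Set.mem_univ _⟩)
      · intro u hu
        rw [Set.mem_singleton_iff] at hu
        subst hu
        rw [Set.mem_iInter₂]
        intro c hc
        obtain ⟨hcv, -⟩ := hc
        rw [mem_cNbr_KmPn] at hcv ⊢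
        rcases hcv with heq | ⟨hrow, hcol⟩
        · left; exact heq.symm
        · right
          exact ⟨Ne.symm hrow, hcol.symm⟩

theorem stmt13 (m n : ℕ) (hm : 3 ≤ m) (hn : 7 ≤ n) :
    (n + 1 + 2) / 3 * (m + 2) - 2 ≤ gammaSID (KmPn m n) := by
  rw [gammaSID]
  apply le_csInf
  · exact ⟨(Set.univ : Set (Fin m × Fin n)).ncard, Set.univ, isSID_univ hm hn, rfl⟩
  · rintro k ⟨S, hS, rfl⟩
    exact main_bound hm hn S hS
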